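/- Let d ≥ 2 be an integer. Then for every Δ ∈ [-log d, log d], M(Δ,d) ≥ Δ² / (3·(log d)²). -/

import Mathlib

open scoped ENNReal BigOperators

noncomputable section

/-- Binary entropy (natural log), with Lean's convention `Real.log 0 = 0`. -/
def binEntropy' (x : ℝ) : ℝ := -(x * Real.log x) - (1 - x) * Real.log (1 - x)

/-- Binary relative entropy, valued in `[0,∞]`. -/
def binRelEntropy (x y : ℝ) : ℝ≥0∞ :=
  if (y = 0 ∧ 0 < x) ∨ (y = 1 ∧ x < 1) then ⊤
  else ENNReal.ofReal (x * Real.log (x / y) + (1 - x) * Real.log ((1 - x) / (1 - y)))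

/-- `M(Δ,d)`: infimum of binary relative entropies under the entropy-difference constraint. -/
def Mfun (Δ : ℝ) (d : ℕ) : ℝ≥0∞ :=
  sInf {m : ℝ≥0∞ | ∃ s r : ℝ, s ∈ Set.Icc (0:ℝ) (((d:ℝ) - 1) / d) ∧
    r ∈ Set.Icc (0:ℝ) (((d:ℝ) - 1) / d) ∧
    binEntropy' s - binEntropy' r + (s - r) * Real.log ((d:ℝ) - 1) = Δ ∧
    m = binRelEntropy s r}

/-- Shannon entropy of a probability vector on `Fin d` (natural log). -/
def shEntropy {d : ℕ} (p : Fin d → ℝ) : ℝ := ∑ i, -(p i * Real.log (p i))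

/-- Relative entropy between probability vectors on `Fin d`, valued in `[0,∞]`. -/
def relEntropy {d : ℕ} (p q : Fin d → ℝ) : ℝ≥0∞ :=
  if ∀ i, q i = 0 → p i = 0
  then ENNReal.ofReal (∑ i, p i * Real.log (p i / q i))
  else ⊤

/-- `N(d) = sup_{0<r<1/2} r(1-r) (log(((1-r)/r)(d-1)))²`. -/
def Nfun (d : ℕ) : ℝ :=
  sSup {v : ℝ | ∃ r : ℝ, 0 < r ∧ r < 1/2 ∧
    v = r * (1 - r) * (Real.log ((1 - r) / r * ((d:ℝ) - 1)))^2}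

section MfunAux
open Real Set Finset
variable {d : ℕ} {x : ℝ}

lemma aux_quad {F E m : ℝ} (h0 : 0 ≤ F) (hFE : F ≤ E) (hEm : E ≤ m/2) :
    F * (m - F) ≤ E * (m - E) := by nlinarith

lemma antitone_texp {t₁ t₂ : ℝ} (h0 : 0 ≤ t₁) (h12 : t₁ ≤ t₂) :
    (t₂ + 1) * Real.exp (-t₂) ≤ (t₁ + 1) * Real.exp (-t₁) := by
  rw [Real.exp_neg, Real.exp_neg, ← div_eq_mul_inv, ← div_eq_mul_inv,
    div_le_div_iff₀ (Real.exp_pos _) (Real.exp_pos _)]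
  have h := Real.add_one_le_exp (t₂ - t₁)
  have e : Real.exp t₂ = Real.exp t₁ * Real.exp (t₂ - t₁) := by rw [← Real.exp_add]; ring_nf
  rw [e]
  have h1 : (t₁ + 1) * Real.exp t₁ * (t₂ - t₁ + 1) ≤ (t₁ + 1) * Real.exp t₁ * Real.exp (t₂ - t₁) :=
    mul_le_mul_of_nonneg_left h (by positivity)
  nlinarith [mul_nonneg (mul_nonneg h0 (sub_nonneg.2 h12)) (Real.exp_pos t₁).le]

lemma antitone_t2exp {t₁ t₂ : ℝ} (h0 : 2 ≤ t₁) (h12 : t₁ ≤ t₂) :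
    (t₂^2 + t₂) * Real.exp (-t₂) ≤ (t₁^2 + t₁) * Real.exp (-t₁) := by
  rw [Real.exp_neg, Real.exp_neg, ← div_eq_mul_inv, ← div_eq_mul_inv,
    div_le_div_iff₀ (Real.exp_pos _) (Real.exp_pos _)]
  have h := Real.quadratic_le_exp_of_nonneg (by linarith : (0:ℝ) ≤ t₂ - t₁)
  have e : Real.exp t₂ = Real.exp t₁ * Real.exp (t₂ - t₁) := by rw [← Real.exp_add]; ring_nf
  rw [e]
  have key : (t₂^2 + t₂) ≤ (t₁^2 + t₁) * (1 + (t₂ - t₁) + (t₂ - t₁)^2/2) := by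
    nlinarith [sq_nonneg (t₂ - t₁), mul_nonneg (sub_nonneg.2 h12)
      (by nlinarith : (0:ℝ) ≤ t₁^2 - t₁ - 1), sq_nonneg t₁]
  calc (t₂^2 + t₂) * Real.exp t₁ ≤ ((t₁^2 + t₁) * (1 + (t₂ - t₁) + (t₂ - t₁)^2/2)) * Real.exp t₁ :=
        mul_le_mul_of_nonneg_right key (Real.exp_pos _).le
    _ ≤ (t₁^2 + t₁) * (Real.exp t₁ * Real.exp (t₂ - t₁)) := by
        have h1 : (t₁^2 + t₁) * Real.exp t₁ * (1 + (t₂ - t₁) + (t₂ - t₁)^2/2)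
            ≤ (t₁^2 + t₁) * Real.exp t₁ * Real.exp (t₂ - t₁) :=
          mul_le_mul_of_nonneg_left h (by positivity)
        nlinarith [h1]

lemma exp_poly_lb {t : ℝ} (ht : 0 ≤ t) :
    1 + t + t^2/2 + t^3/6 + t^4/24 + t^5/120 + t^6/720 + t^7/5040 + t^8/40320
      + t^9/362880 + t^10/3628800 + t^11/39916800 + t^12/479001600
      + t^13/6227020800 + t^14/87178291200 + t^15/1307674368000 ≤ Real.exp t := by
  have h := Real.sum_le_exp_of_nonneg ht 16
  rw [show (16:ℕ) = 15+1 by rfl] at h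
  simp only [Finset.sum_range_succ, Finset.sum_range_zero] at h
  norm_num [Nat.factorial] at h
  convert h using 2 <;> ring

-- numeric helper: exp (-(a * log 2)) ≤ q

lemma exp_neg_mul_log_two_le {a q P : ℝ} (hq : 0 < q) (ha : 0 ≤ a)
    (hP : P = a * 0.6931471803)
    (h : 1 ≤ q * (1 + P + P^2/2 + P^3/6 + P^4/24 + P^5/120 + P^6/720 + P^7/5040 + P^8/40320
      + P^9/362880 + P^10/3628800 + P^11/39916800 + P^12/479001600
      + P^13/6227020800 + P^14/87178291200 + P^15/1307674368000)) :
    Real.exp (-(a * Real.log 2)) ≤ q := by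
  have hP0 : 0 ≤ P := by rw [hP]; positivity
  have h1 : P ≤ a * Real.log 2 := by
    rw [hP]; exact mul_le_mul_of_nonneg_left (le_of_lt Real.log_two_gt_d9) ha
  have h2 : (1 + P + P^2/2 + P^3/6 + P^4/24 + P^5/120 + P^6/720 + P^7/5040 + P^8/40320
      + P^9/362880 + P^10/3628800 + P^11/39916800 + P^12/479001600
      + P^13/6227020800 + P^14/87178291200 + P^15/1307674368000) ≤ Real.exp (a * Real.log 2) :=
    le_trans (exp_poly_lb hP0) (Real.exp_le_exp.2 h1)
  have h3 : (1:ℝ) ≤ q * Real.exp (a * Real.log 2) := by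
    calc (1:ℝ) ≤ q * _ := h
    _ ≤ q * Real.exp (a * Real.log 2) := mul_le_mul_of_nonneg_left h2 hq.le
  rw [Real.exp_neg, inv_eq_one_div, div_le_iff₀ (Real.exp_pos _)]
  linarith

lemma piece_core {A c m F a b q u : ℝ}
    (hA : A + 1 = Real.exp c) (hc : Real.log 2 ≤ c)
    (ha2 : 2 ≤ a) (ham : a * c ≤ m) (hmb : m ≤ b * c)
    (hq : 0 < q) (hq2 : Real.exp (-(a * Real.log 2)) ≤ q)
    (hu1 : (a + 1.4427) * q ≤ u) (hu2 : u ≤ a/2) (hu3 : u * (b - u) ≤ 3/2)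
    (hF0 : 0 ≤ F) (hFe : F ≤ A * ((m+1) * Real.exp (-m))) :
    F * (m - F) ≤ 3/2 * c^2 := by
  have hlog2 : (0.6931471803:ℝ) < Real.log 2 := Real.log_two_gt_d9
  have hc0 : 0 < c := lt_of_lt_of_le (by linarith) hc
  have hA1 : 1 ≤ A := by
    have h2 : Real.exp (Real.log 2) ≤ Real.exp c := Real.exp_le_exp.2 hc
    rw [Real.exp_log (by norm_num : (0:ℝ) < 2)] at h2
    linarith
  have hstep1 : (m+1) * Real.exp (-m) ≤ (a*c+1) * Real.exp (-(a*c)) :=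
    antitone_texp (by positivity) ham
  -- step 2 : A * exp(-(a*c)) ≤ exp(-(a*log 2))
  have hstep2 : A * Real.exp (-(a*c)) ≤ Real.exp (-(a * Real.log 2)) := by
    have hkey : A ≤ Real.exp (a*c - a*Real.log 2) := by
      have h1 : Real.exp (2*(c - Real.log 2)) ≤ Real.exp (a*(c - Real.log 2)) :=
        Real.exp_le_exp.2 (mul_le_mul_of_nonneg_right ha2 (by linarith))
      have h2 : Real.exp (2*(c - Real.log 2)) = (Real.exp c / 2)^2 := by
        rw [show 2*(c - Real.log 2) = (c - Real.log 2) + (c - Real.log 2) by ring,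
          Real.exp_add, Real.exp_sub, Real.exp_log (by norm_num : (0:ℝ) < 2)]
        ring
      have h3 : A ≤ (Real.exp c / 2)^2 := by rw [← hA]; nlinarith [sq_nonneg (A - 1)]
      calc A ≤ (Real.exp c / 2)^2 := h3
        _ = Real.exp (2*(c - Real.log 2)) := h2.symm
        _ ≤ Real.exp (a*(c - Real.log 2)) := h1
        _ = Real.exp (a*c - a*Real.log 2) := by ring_nf
    calc A * Real.exp (-(a*c)) ≤ Real.exp (a*c - a*Real.log 2) * Real.exp (-(a*c)) :=
          mul_le_mul_of_nonneg_right hkey (Real.exp_pos _).le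
      _ = Real.exp (-(a * Real.log 2)) := by rw [← Real.exp_add]; ring_nf
  have hqc : A * Real.exp (-(a*c)) ≤ q := le_trans hstep2 hq2
  have hFuc : F ≤ u * c := by
    have h1 : F ≤ (a*c+1) * (A * Real.exp (-(a*c))) := by
      calc F ≤ A * ((m+1) * Real.exp (-m)) := hFe
        _ ≤ A * ((a*c+1) * Real.exp (-(a*c))) :=
            mul_le_mul_of_nonneg_left hstep1 (by linarith)
        _ = (a*c+1) * (A * Real.exp (-(a*c))) := by ring
    have h2 : F ≤ (a*c+1) * q := by
      calc F ≤ (a*c+1) * (A * Real.exp (-(a*c))) := h1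
        _ ≤ (a*c+1) * q := mul_le_mul_of_nonneg_left hqc (by positivity)
    have h3 : (a*c+1) * q ≤ ((a + 1.4427) * q) * c := by
      have : (1:ℝ) ≤ 1.4427 * c := by nlinarith
      nlinarith [mul_pos (by positivity : (0:ℝ) < a) hc0, hq]
    calc F ≤ (a*c+1) * q := h2
      _ ≤ ((a + 1.4427) * q) * c := h3
      _ ≤ u * c := mul_le_mul_of_nonneg_right hu1 hc0.le
  have huc2 : u * c ≤ m / 2 := by nlinarith [mul_le_mul_of_nonneg_right hu2 hc0.le]
  have hu0 : 0 ≤ u := le_trans (by positivity) hu1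
  calc F * (m - F) ≤ (u*c) * (m - u*c) := aux_quad hF0 hFuc huc2
    _ ≤ (u*c) * (b*c - u*c) := mul_le_mul_of_nonneg_left (by linarith) (by positivity)
    _ = (u * (b - u)) * c^2 := by ring
    _ ≤ (3/2) * c^2 := mul_le_mul_of_nonneg_right hu3 (by positivity)

lemma master_core {A c m F : ℝ} (hA : A + 1 = Real.exp c) (hc : Real.log 2 ≤ c)
    (hm : c ≤ m) (hF0 : 0 ≤ F) (hFm : F ≤ m)
    (hFe : F ≤ A * ((m+1) * Real.exp (-m))) :
    F * (m - F) ≤ 3/2 * c^2 := by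
  have hlog2 : (0.6931471803:ℝ) < Real.log 2 := Real.log_two_gt_d9
  have hc0 : 0 < c := lt_of_lt_of_le (by linarith) hc
  have hA1 : 1 ≤ A := by
    have h2 : Real.exp (Real.log 2) ≤ Real.exp c := Real.exp_le_exp.2 hc
    rw [Real.exp_log (by norm_num : (0:ℝ) < 2)] at h2
    linarith
  rcases le_or_gt m (61/25*c) with hcase | hcase
  · -- AM-GM case
    have hm0 : 0 ≤ m := le_trans hc0.le hm
    nlinarith [sq_nonneg (m - 2*F), mul_le_mul hcase hcase hm0 (by positivity : (0:ℝ) ≤ 61/25*c)]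
  rcases le_or_gt (4*c) m with hcase4 | hcase4
  · -- tail case
    have h2c : (2:ℝ) ≤ 4*c := by nlinarith
    have h1 : F * (m - F) ≤ F * m := by nlinarith [sq_nonneg F]
    have h2 : F * m ≤ A * ((m^2+m) * Real.exp (-m)) := by
      have := mul_le_mul_of_nonneg_right hFe (le_trans (by positivity : (0:ℝ) ≤ 4*c) hcase4)
      calc F * m ≤ A * ((m+1) * Real.exp (-m)) * m := this
        _ = A * ((m^2+m) * Real.exp (-m)) := by ring
    have h3 : (m^2+m) * Real.exp (-m) ≤ ((4*c)^2+4*c) * Real.exp (-(4*c)) :=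
      antitone_t2exp h2c hcase4
    have hexp4 : Real.exp (-(4*c)) = ((A+1)^4)⁻¹ := by
      rw [hA, Real.exp_neg]
      congr 1
      rw [show (4:ℝ)*c = c + (c + (c + c)) by ring, Real.exp_add, Real.exp_add, Real.exp_add]
      ring
    have hA16 : 16*A ≤ (A+1)^4 := by nlinarith [sq_nonneg (A-1), sq_nonneg (A+1)]
    have hApos : (0:ℝ) < A := by linarith
    have h4 : A * (((4*c)^2+4*c) * Real.exp (-(4*c))) ≤ 3/2 * c^2 := by
      rw [hexp4, show A * (((4*c)^2+4*c) * ((A+1)^4)⁻¹) = (A * (16*c^2+4*c)) / (A+1)^4 by ring]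
      rw [div_le_iff₀ (by positivity)]
      have hc5 : (1/2:ℝ) ≤ c := by linarith
      nlinarith [mul_le_mul_of_nonneg_left hA16 (by positivity : (0:ℝ) ≤ 3/2*c^2),
        mul_nonneg (mul_nonneg (by linarith : (0:ℝ) ≤ 4*c) hApos.le) (by linarith : (0:ℝ) ≤ 2*c - 1)]
    calc F * (m - F) ≤ F * m := h1
      _ ≤ A * ((m^2+m) * Real.exp (-m)) := h2
      _ ≤ A * (((4*c)^2+4*c) * Real.exp (-(4*c))) := mul_le_mul_of_nonneg_left h3 hApos.le
      _ ≤ 3/2 * c^2 := h4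
  -- middle: pieces
  rcases le_or_gt m (137/50*c) with hp0 | hp0
  · exact piece_core (a := 61/25) (b := 137/50) (q := 46071/250000) (u := 2236/3125) hA hc (by norm_num) (by linarith) hp0 (by norm_num)
      (exp_neg_mul_log_two_le (by norm_num) (by norm_num) rfl (by norm_num))
      (by norm_num) (by norm_num) (by norm_num) hF0 hFe
  rcases le_or_gt m (59/20*c) with hp1 | hp1
  · exact piece_core (a := 137/50) (b := 59/20) (q := 29937/200000) (u := 78261/125000) hA hc (by norm_num) (by linarith) hp1 (by norm_num)
      (exp_neg_mul_log_two_le (by norm_num) (by norm_num) rfl (by norm_num))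
      (by norm_num) (by norm_num) (by norm_num) hF0 hFe
  rcases le_or_gt m (78/25*c) with hp2 | hp2
  · exact piece_core (a := 59/20) (b := 78/25) (q := 129409/1000000) (u := 113691/200000) hA hc (by norm_num) (by linarith) hp2 (by norm_num)
      (exp_neg_mul_log_two_le (by norm_num) (by norm_num) rfl (by norm_num))
      (by norm_num) (by norm_num) (by norm_num) hF0 hFe
  rcases le_or_gt m (329/100*c) with hp3 | hp3
  · exact piece_core (a := 78/25) (b := 329/100) (q := 7189/62500) (u := 524821/1000000) hA hc (by norm_num) (by linarith) hp3 (by norm_num)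
      (exp_neg_mul_log_two_le (by norm_num) (by norm_num) rfl (by norm_num))
      (by norm_num) (by norm_num) (by norm_num) hF0 hFe
  rcases le_or_gt m (349/100*c) with hp4 | hp4
  · exact piece_core (a := 329/100) (b := 349/100) (q := 51119/500000) (u := 241931/500000) hA hc (by norm_num) (by linarith) hp4 (by norm_num)
      (exp_neg_mul_log_two_le (by norm_num) (by norm_num) rfl (by norm_num))
      (by norm_num) (by norm_num) (by norm_num) hF0 hFe
  rcases le_or_gt m (15/4*c) with hp5 | hp5
  · exact piece_core (a := 349/100) (b := 15/4) (q := 22251/250000) (u := 439031/1000000) hA hc (by norm_num) (by linarith) hp5 (by norm_num)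
      (exp_neg_mul_log_two_le (by norm_num) (by norm_num) rfl (by norm_num))
      (by norm_num) (by norm_num) (by norm_num) hF0 hFe
  · exact piece_core (a := 15/4) (b := 4) (q := 37163/500000) (u := 385953/1000000) hA hc (by norm_num) (by linarith) (by linarith) (by norm_num)
      (exp_neg_mul_log_two_le (by norm_num) (by norm_num) rfl (by norm_num))
      (by norm_num) (by norm_num) (by norm_num) hF0 hFe

lemma cast_facts (hd : 2 ≤ d) : (2:ℝ) ≤ (d:ℝ) ∧ (0:ℝ) < d ∧ (1:ℝ) ≤ (d:ℝ)-1 := by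
  have : (2:ℝ) ≤ (d:ℝ) := by exact_mod_cast hd
  exact ⟨this, by linarith, by linarith⟩

lemma x_lt_one (hd : 2 ≤ d) (hxb : x ≤ ((d:ℝ)-1)/d) : x < 1 := by
  obtain ⟨h2, hdpos, hA⟩ := cast_facts hd
  have : ((d:ℝ)-1)/d < 1 := by rw [div_lt_one hdpos]; linarith
  linarith

lemma phi_nonneg (hd : 2 ≤ d) (hx : 0 < x) (hxb : x ≤ ((d:ℝ)-1)/d) :
    0 ≤ Real.log ((d:ℝ)-1) + Real.log (1-x) - Real.log x := by
  obtain ⟨h2, hdpos, hA⟩ := cast_facts hd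
  have hx1 : x < 1 := x_lt_one hd hxb
  have h1x : 0 < 1 - x := by linarith
  have hxd : x * d ≤ (d:ℝ)-1 := by rwa [← le_div_iff₀ hdpos]
  have hkey : x ≤ ((d:ℝ)-1) * (1-x) := by nlinarith
  have hlog : Real.log x ≤ Real.log (((d:ℝ)-1) * (1-x)) :=
    Real.log_le_log hx hkey
  rw [Real.log_mul (by linarith) (by linarith)] at hlog
  linarith

lemma binEntropy_explicit (y : ℝ) :
    Real.binEntropy y = -(y * Real.log y) - (1-y) * Real.log (1-y) := by
  rw [Real.binEntropy, Real.log_inv, Real.log_inv]; ring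

lemma qaryEntropy_explicit (d : ℕ) (y : ℝ) :
    Real.qaryEntropy d y = y * Real.log ((d:ℝ)-1) + Real.binEntropy y := by
  rw [Real.qaryEntropy]
  norm_num

lemma master (hd : 2 ≤ d) (hx : 0 < x) (hxb : x ≤ ((d:ℝ)-1)/d) :
    Real.qaryEntropy d x * ((1-x) * (Real.log ((d:ℝ)-1) + Real.log (1-x) - Real.log x))
      ≤ 3/2 * (Real.log d)^2 := by
  obtain ⟨h2, hdpos, hA1⟩ := cast_facts hd
  have hx1 : x < 1 := x_lt_one hd hxb
  have h1x : 0 < 1 - x := by linarith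
  have hApos : (0:ℝ) < (d:ℝ)-1 := by linarith
  set A : ℝ := (d:ℝ)-1 with hAdef
  set c : ℝ := Real.log d with hcdef
  set m : ℝ := Real.log A - Real.log x with hmdef
  set F : ℝ := Real.qaryEntropy d x with hFdef
  set φ : ℝ := Real.log A + Real.log (1-x) - Real.log x with hφdef
  have hFexp : F = x * Real.log A - x * Real.log x - (1-x) * Real.log (1-x) := by
    rw [hFdef, qaryEntropy_explicit, binEntropy_explicit]; ring
  have hid : F + (1-x) * φ = m := by rw [hFexp, hφdef, hmdef]; ring
  have hφ0 : 0 ≤ φ := phi_nonneg hd hx hxb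
  have hF0 : 0 ≤ F := Real.qaryEntropy_nonneg hx.le hx1.le
  have hFm : F ≤ m := by nlinarith [mul_nonneg h1x.le hφ0]
  have hAc : A + 1 = Real.exp c := by
    rw [hcdef, Real.exp_log hdpos]; ring
  have hc : Real.log 2 ≤ c := Real.log_le_log (by norm_num) h2
  have hm : c ≤ m := by
    have hdx : (d:ℝ) ≤ A / x := by
      rw [le_div_iff₀ hx]
      nlinarith [(le_div_iff₀ hdpos).mp hxb]
    have := Real.log_le_log hdpos hdx
    rwa [Real.log_div (by linarith) (by linarith)] at this
  have hexpm : Real.exp (-m) = x / A := by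
    rw [show -m = Real.log x - Real.log A by rw [hmdef]; ring, Real.exp_sub,
      Real.exp_log hx, Real.exp_log hApos]
  have hxAe : A * Real.exp (-m) = x := by
    rw [hexpm]; field_simp
  have hFe : F ≤ A * ((m+1) * Real.exp (-m)) := by
    have h1 : A * ((m+1) * Real.exp (-m)) = x * (m+1) := by
      rw [show A * ((m+1) * Real.exp (-m)) = (m+1) * (A * Real.exp (-m)) by ring, hxAe]; ring
    have hlg : 1 - (1-x)⁻¹ ≤ Real.log (1-x) := Real.one_sub_inv_le_log_of_pos h1x
    have h3 : -x ≤ (1-x) * Real.log (1-x) := by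
      have h4 := mul_le_mul_of_nonneg_left hlg h1x.le
      have h5 : (1-x) * (1 - (1-x)⁻¹) = -x := by
        field_simp; ring
      nlinarith [h4, h5]
    rw [h1, hFexp]
    have : x * Real.log A - x * Real.log x = x * m := by rw [hmdef]; ring
    nlinarith
  have hmain := master_core hAc hc hm hF0 hFm hFe
  have hgoal : F * ((1-x) * φ) = F * (m - F) := by
    rw [show m - F = (1-x) * φ by linarith]
  rw [← hFdef, ← hφdef] at *
  calc F * ((1-x) * φ) = F * (m - F) := hgoal
    _ ≤ 3/2 * c^2 := hmain

lemma L3 (hd : 2 ≤ d) (hx : 0 < x) (hxb : x ≤ ((d:ℝ)-1)/d) :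
    (x*(1-x)) * (Real.log ((d:ℝ)-1) + Real.log (1-x) - Real.log x)^2
      ≤ 3/2 * (Real.log d)^2 := by
  obtain ⟨h2, hdpos, hA1⟩ := cast_facts hd
  have hx1 : x < 1 := x_lt_one hd hxb
  have h1x : 0 < 1 - x := by linarith
  have hφ0 := phi_nonneg hd hx hxb
  set φ : ℝ := Real.log ((d:ℝ)-1) + Real.log (1-x) - Real.log x with hφdef
  have hxφF : x * φ ≤ Real.qaryEntropy d x := by
    rw [qaryEntropy_explicit, binEntropy_explicit, hφdef]
    have : Real.log (1-x) ≤ 0 := Real.log_nonpos (by linarith) (by linarith)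
    nlinarith
  calc (x*(1-x)) * φ^2 = (x*φ) * ((1-x)*φ) := by ring
    _ ≤ Real.qaryEntropy d x * ((1-x)*φ) :=
        mul_le_mul_of_nonneg_right hxφF (mul_nonneg h1x.le hφ0)
    _ ≤ 3/2 * (Real.log d)^2 := master hd hx hxb

lemma bfrac (hd : 2 ≤ d) : ((d:ℝ)-1)/d = 1 - 1/d := by
  have : (0:ℝ) < d := by positivity
  field_simp

lemma qmono (hd : 2 ≤ d) {y z : ℝ} (hy0 : 0 ≤ y) (hyz : y ≤ z) (hzb : z ≤ ((d:ℝ)-1)/d) :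
    Real.qaryEntropy d y ≤ Real.qaryEntropy d z := by
  have hb := bfrac hd
  have h1 : y ∈ Icc (0:ℝ) (1 - 1/d) := ⟨hy0, by rw [← hb]; linarith⟩
  have h2 : z ∈ Icc (0:ℝ) (1 - 1/d) := ⟨by linarith, by rw [← hb]; linarith⟩
  exact (Real.qaryEntropy_strictMonoOn hd).monotoneOn h1 h2 hyz

/-- Level-2 inequality for the case x > r. -/

lemma level2_gt (hd : 2 ≤ d) {r x : ℝ} (hr : 0 < r) (hrx : r ≤ x) (hxb : x ≤ ((d:ℝ)-1)/d) :
    (Real.qaryEntropy d x - Real.qaryEntropy d r)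
        * (Real.log ((d:ℝ)-1) + Real.log (1-x) - Real.log x)
      ≤ 3/2 * (Real.log d)^2
        * (Real.log x - Real.log r + (Real.log (1-r) - Real.log (1-x))) := by
  have hd2 : (2:ℝ) ≤ d := by exact_mod_cast hd
  have hdpos : (0:ℝ) < d := by linarith
  have hb1 : ((d:ℝ)-1)/d < 1 := by rw [div_lt_one hdpos]; linarith
  have hx1 : x < 1 := lt_of_le_of_lt hxb hb1
  set c : ℝ := Real.log d with hcdef
  set H : ℝ → ℝ := fun y => 3/2*c^2 * (Real.log y - Real.log r + (Real.log (1-r) - Real.log (1-y)))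
      - (Real.qaryEntropy d y - Real.qaryEntropy d r)
        * (Real.log ((d:ℝ)-1) + Real.log (1-y) - Real.log y) with hHdef
  have hmono : MonotoneOn H (Icc r x) := by
    apply monotoneOn_of_deriv_nonneg (convex_Icc r x)
    · -- continuity
      apply ContinuousOn.sub
      · apply ContinuousOn.mul continuousOn_const
        apply ContinuousOn.add
        · exact ContinuousOn.sub
            (Real.continuousOn_log.mono (fun y hy => by
              simp only [mem_compl_iff, mem_singleton_iff]
              intro h; rw [h] at hy; exact absurd hy.1 (by linarith)))
            continuousOn_const
        · exact ContinuousOn.sub continuousOn_const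
            ((Real.continuousOn_log.comp ((continuous_const.sub continuous_id).continuousOn)
              (fun y hy => by
                simp only [mem_compl_iff, mem_singleton_iff]
                intro h
                have : 1 - y = 0 := h
                have : y ≤ x := hy.2
                linarith)))
      · apply ContinuousOn.mul
        · exact (Real.qaryEntropy_continuous.continuousOn.sub continuousOn_const)
        · apply ContinuousOn.sub
          · apply ContinuousOn.add continuousOn_const
            exact (Real.continuousOn_log.comp ((continuous_const.sub continuous_id).continuousOn)
              (fun y hy => by
                simp only [mem_compl_iff, mem_singleton_iff]
                intro h
                have : 1 - y = 0 := h
                have : y ≤ x := hy.2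
                linarith))
          · exact Real.continuousOn_log.mono (fun y hy => by
              simp only [mem_compl_iff, mem_singleton_iff]
              intro h; rw [h] at hy; exact absurd hy.1 (by linarith))
    · -- differentiability on interior
      rw [interior_Icc]
      intro y hy
      have hy0 : 0 < y := lt_trans hr hy.1
      have hy1 : y < 1 := lt_of_lt_of_le hy.2 (le_of_lt hx1)
      have h1y : 0 < 1 - y := by linarith
      apply DifferentiableAt.differentiableWithinAt
      apply DifferentiableAt.sub
      · apply DifferentiableAt.const_mul
        apply DifferentiableAt.add
        · exact (Real.differentiableAt_log hy0.ne').sub_const _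
        · apply DifferentiableAt.const_sub
          exact (Real.differentiableAt_log h1y.ne').comp y
            ((differentiable_const (1:ℝ)).differentiableAt.sub differentiableAt_id)
      · apply DifferentiableAt.mul
        · exact (Real.differentiableAt_qaryEntropy hy0.ne' hy1.ne).sub_const _
        · apply DifferentiableAt.sub
          · apply DifferentiableAt.add (differentiableAt_const _)
            exact (Real.differentiableAt_log h1y.ne').comp y
              ((differentiable_const (1:ℝ)).differentiableAt.sub differentiableAt_id)
          · exact Real.differentiableAt_log hy0.ne'
    · -- deriv nonneg
      rw [interior_Icc]
      intro y hy
      have hy0 : 0 < y := lt_trans hr hy.1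
      have hy1 : y < 1 := lt_of_lt_of_le hy.2 (le_of_lt hx1)
      have h1y : 0 < 1 - y := by linarith
      have hyb : y ≤ ((d:ℝ)-1)/d := le_trans (le_of_lt hy.2) hxb
      set φ : ℝ := Real.log ((d:ℝ)-1) + Real.log (1-y) - Real.log y with hφdef
      have hlog : HasDerivAt Real.log y⁻¹ y := Real.hasDerivAt_log hy0.ne'
      have hlog1 : HasDerivAt (fun z => Real.log (1-z)) (-1/(1-y)) y :=
        ((hasDerivAt_id y).const_sub 1).log h1y.ne'
      have hq : HasDerivAt (Real.qaryEntropy d) φ y :=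
        Real.hasDerivAt_qaryEntropy hy0.ne' hy1.ne
      have hH : HasDerivAt H
          ((3/2*c^2 + (Real.qaryEntropy d y - Real.qaryEntropy d r) - (y*(1-y))*φ^2)
            / (y*(1-y))) y := by
        have hterm1 : HasDerivAt (fun z => Real.log z - Real.log r + (Real.log (1-r) - Real.log (1-z)))
            (y⁻¹ + (-(-1/(1-y)))) y := (hlog.sub_const _).add (hlog1.const_sub _)
        have hφd : HasDerivAt (fun z => Real.log ((d:ℝ)-1) + Real.log (1-z) - Real.log z)
            ((0 + -1/(1-y)) - y⁻¹) y := ((hasDerivAt_const y _).add hlog1).sub hlog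
        have hterm2 : HasDerivAt (fun z => (Real.qaryEntropy d z - Real.qaryEntropy d r)
              * (Real.log ((d:ℝ)-1) + Real.log (1-z) - Real.log z))
            (φ * (Real.log ((d:ℝ)-1) + Real.log (1-y) - Real.log y)
              + (Real.qaryEntropy d y - Real.qaryEntropy d r) * ((0 + -1/(1-y)) - y⁻¹)) y :=
          (hq.sub_const _).mul hφd
        have := (hterm1.const_mul (3/2*c^2)).sub hterm2
        refine this.congr_deriv ?_
        rw [← hφdef]
        field_simp
        ring
      rw [hH.deriv]
      apply div_nonneg _ (by positivity)
      have hL3 := L3 hd hy0 hyb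
      have hmono := qmono hd hr.le hy.1.le hyb
      rw [← hφdef] at hL3
      linarith
  -- conclude
  have h0 : H r = 0 := by
    rw [hHdef]; simp
  have := hmono (left_mem_Icc.mpr hrx) (right_mem_Icc.mpr hrx) hrx
  rw [h0] at this
  rw [hHdef] at this
  simp only at this
  linarith

lemma key_gt (hd : 2 ≤ d) {r s : ℝ} (hr : 0 < r) (hrs : r ≤ s) (hsb : s ≤ ((d:ℝ)-1)/d) :
    (Real.qaryEntropy d s - Real.qaryEntropy d r)^2
      ≤ 3 * (Real.log d)^2
        * (s*(Real.log s - Real.log r) + (1-s)*(Real.log (1-s) - Real.log (1-r))) := by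
  have hd2 : (2:ℝ) ≤ d := by exact_mod_cast hd
  have hdpos : (0:ℝ) < d := by linarith
  have hb1 : ((d:ℝ)-1)/d < 1 := by rw [div_lt_one hdpos]; linarith
  have hs1 : s < 1 := lt_of_le_of_lt hsb hb1
  set c : ℝ := Real.log d with hcdef
  set G : ℝ → ℝ := fun y => 3*c^2 * (y*(Real.log y - Real.log r)
      + (1-y)*(Real.log (1-y) - Real.log (1-r)))
      - (Real.qaryEntropy d y - Real.qaryEntropy d r)^2 with hGdef
  have hmono : MonotoneOn G (Icc r s) := by
    apply monotoneOn_of_deriv_nonneg (convex_Icc r s)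
    · -- continuity
      apply ContinuousOn.sub
      · apply ContinuousOn.mul continuousOn_const
        apply ContinuousOn.add
        · apply ContinuousOn.mul continuousOn_id
          exact ContinuousOn.sub
            (Real.continuousOn_log.mono (fun y hy => by
              simp only [mem_compl_iff, mem_singleton_iff]
              intro h; rw [h] at hy; exact absurd hy.1 (by linarith)))
            continuousOn_const
        · apply ContinuousOn.mul (continuousOn_const.sub continuousOn_id)
          exact ContinuousOn.sub
            ((Real.continuousOn_log.comp ((continuous_const.sub continuous_id).continuousOn)
              (fun y hy => by
                simp only [mem_compl_iff, mem_singleton_iff]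
                intro h
                have h1 : 1 - y = 0 := h
                have : y ≤ s := hy.2
                linarith)))
            continuousOn_const
      · exact (Real.qaryEntropy_continuous.continuousOn.sub continuousOn_const).pow 2
    · rw [interior_Icc]
      intro y hy
      have hy0 : 0 < y := lt_trans hr hy.1
      have hy1 : y < 1 := lt_of_lt_of_le hy.2 (le_of_lt hs1)
      have h1y : 0 < 1 - y := by linarith
      apply DifferentiableAt.differentiableWithinAt
      apply DifferentiableAt.sub
      · apply DifferentiableAt.const_mul
        apply DifferentiableAt.add
        · exact differentiableAt_id.mul ((Real.differentiableAt_log hy0.ne').sub_const _)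
        · exact ((differentiable_const (1:ℝ)).differentiableAt.sub differentiableAt_id).mul
            (((Real.differentiableAt_log h1y.ne').comp y
              ((differentiable_const (1:ℝ)).differentiableAt.sub differentiableAt_id)).sub_const _)
      · exact ((Real.differentiableAt_qaryEntropy hy0.ne' hy1.ne).sub_const _).pow 2
    · rw [interior_Icc]
      intro y hy
      have hy0 : 0 < y := lt_trans hr hy.1
      have hy1 : y < 1 := lt_of_lt_of_le hy.2 (le_of_lt hs1)
      have h1y : 0 < 1 - y := by linarith
      have hyb : y ≤ ((d:ℝ)-1)/d := le_trans (le_of_lt hy.2) hsb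
      set φ : ℝ := Real.log ((d:ℝ)-1) + Real.log (1-y) - Real.log y with hφdef
      have hlog : HasDerivAt Real.log y⁻¹ y := Real.hasDerivAt_log hy0.ne'
      have hlog1 : HasDerivAt (fun z => Real.log (1-z)) (-1/(1-y)) y :=
        ((hasDerivAt_id y).const_sub 1).log h1y.ne'
      have hq : HasDerivAt (Real.qaryEntropy d) φ y :=
        Real.hasDerivAt_qaryEntropy hy0.ne' hy1.ne
      have hG : HasDerivAt G
          (3*c^2 * (Real.log y - Real.log r + (Real.log (1-r) - Real.log (1-y)))
            - 2*(Real.qaryEntropy d y - Real.qaryEntropy d r)*φ) y := by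
        have ht1 : HasDerivAt (fun z => z*(Real.log z - Real.log r))
            (1*(Real.log y - Real.log r) + y*y⁻¹) y :=
          (hasDerivAt_id y).mul (hlog.sub_const _)
        have ht2 : HasDerivAt (fun z => (1-z)*(Real.log (1-z) - Real.log (1-r)))
            ((-1)*(Real.log (1-y) - Real.log (1-r)) + (1-y)*(-1/(1-y))) y :=
          ((hasDerivAt_id y).const_sub 1).mul (hlog1.sub_const _)
        have ht3 : HasDerivAt (fun z => (Real.qaryEntropy d z - Real.qaryEntropy d r)^2)
            (2*(Real.qaryEntropy d y - Real.qaryEntropy d r)^1*φ) y :=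
          (hq.sub_const _).pow 2
        have := ((ht1.add ht2).const_mul (3*c^2)).sub ht3
        refine this.congr_deriv ?_
        field_simp
        ring
      rw [hG.deriv]
      have hl2 := level2_gt hd hr hy.1.le hyb
      rw [← hφdef, ← hcdef] at hl2
      clear_value φ c
      linarith
  have h0 : G r = 0 := by rw [hGdef]; simp
  have := hmono (left_mem_Icc.mpr hrs) (right_mem_Icc.mpr hrs) hrs
  rw [h0] at this
  rw [hGdef] at this
  simp only at this
  linarith

lemma key_lt (hd : 2 ≤ d) {s r : ℝ} (hs0 : 0 ≤ s) (hsr : s ≤ r) (hrb : r ≤ ((d:ℝ)-1)/d) :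
    (Real.qaryEntropy d r - Real.qaryEntropy d s)^2
      ≤ 3 * (Real.log d)^2
        * (s*(Real.log s - Real.log r) + (1-s)*(Real.log (1-s) - Real.log (1-r))) := by
  have hd2 : (2:ℝ) ≤ d := by exact_mod_cast hd
  have hdpos : (0:ℝ) < d := by linarith
  have hb1 : ((d:ℝ)-1)/d < 1 := by rw [div_lt_one hdpos]; linarith
  have hr1 : r < 1 := lt_of_le_of_lt hrb hb1
  have hs1 : s < 1 := lt_of_le_of_lt hsr hr1
  set c : ℝ := Real.log d with hcdef
  set G : ℝ → ℝ := fun ρ => 3*c^2 * (s*Real.log s - s*Real.log ρ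
      + (1-s)*(Real.log (1-s) - Real.log (1-ρ)))
      - (Real.qaryEntropy d ρ - Real.qaryEntropy d s)^2 with hGdef
  have hmono : MonotoneOn G (Icc s r) := by
    apply monotoneOn_of_deriv_nonneg (convex_Icc s r)
    · -- continuity
      apply ContinuousOn.sub
      · apply ContinuousOn.mul continuousOn_const
        apply ContinuousOn.add
        · -- fun ρ => s*log s - s*log ρ
          rcases eq_or_lt_of_le hs0 with h0 | h0
          · have : (fun ρ : ℝ => s*Real.log s - s*Real.log ρ) = fun _ => 0 := by
              funext ρ; rw [← h0]; ring
            rw [this]; exact continuousOn_const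
          · apply ContinuousOn.sub continuousOn_const
            apply ContinuousOn.mul continuousOn_const
            exact Real.continuousOn_log.mono (fun y hy => by
              simp only [mem_compl_iff, mem_singleton_iff]
              intro h; rw [h] at hy; exact absurd hy.1 (by linarith))
        · apply ContinuousOn.mul continuousOn_const
          exact ContinuousOn.sub continuousOn_const
            ((Real.continuousOn_log.comp ((continuous_const.sub continuous_id).continuousOn)
              (fun y hy => by
                simp only [mem_compl_iff, mem_singleton_iff]
                intro h
                have h1 : 1 - y = 0 := h
                have : y ≤ r := hy.2
                linarith)))
      · exact (Real.qaryEntropy_continuous.continuousOn.sub continuousOn_const).pow 2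
    · rw [interior_Icc]
      intro y hy
      have hy0 : 0 < y := lt_of_le_of_lt hs0 hy.1
      have hy1 : y < 1 := lt_of_lt_of_le hy.2 (le_of_lt hr1)
      have h1y : 0 < 1 - y := by linarith
      apply DifferentiableAt.differentiableWithinAt
      apply DifferentiableAt.sub
      · apply DifferentiableAt.const_mul
        apply DifferentiableAt.add
        · exact (differentiableAt_const _).sub ((Real.differentiableAt_log hy0.ne').const_mul _)
        · exact ((differentiableAt_const _).sub
            ((Real.differentiableAt_log h1y.ne').comp y
              ((differentiable_const (1:ℝ)).differentiableAt.sub differentiableAt_id))).const_mul _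
      · exact ((Real.differentiableAt_qaryEntropy hy0.ne' hy1.ne).sub_const _).pow 2
    · rw [interior_Icc]
      intro y hy
      have hy0 : 0 < y := lt_of_le_of_lt hs0 hy.1
      have hy1 : y < 1 := lt_of_lt_of_le hy.2 (le_of_lt hr1)
      have h1y : 0 < 1 - y := by linarith
      have hyb : y ≤ ((d:ℝ)-1)/d := le_trans (le_of_lt hy.2) hrb
      set φ : ℝ := Real.log ((d:ℝ)-1) + Real.log (1-y) - Real.log y with hφdef
      have hφ0 : 0 ≤ φ := phi_nonneg hd hy0 hyb
      have hlog : HasDerivAt Real.log y⁻¹ y := Real.hasDerivAt_log hy0.ne'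
      have hlog1 : HasDerivAt (fun z => Real.log (1-z)) (-1/(1-y)) y :=
        ((hasDerivAt_id y).const_sub 1).log h1y.ne'
      have hq : HasDerivAt (Real.qaryEntropy d) φ y :=
        Real.hasDerivAt_qaryEntropy hy0.ne' hy1.ne
      have hG : HasDerivAt G
          (3*c^2 * (-(s*y⁻¹) + (1-s)*(1/(1-y)))
            - 2*(Real.qaryEntropy d y - Real.qaryEntropy d s)*φ) y := by
        have ht1 : HasDerivAt (fun z => s*Real.log s - s*Real.log z) (-(s*y⁻¹)) y :=
          (hlog.const_mul s).const_sub _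
        have ht2 : HasDerivAt (fun z => (1-s)*(Real.log (1-s) - Real.log (1-z)))
            ((1-s)*(-(-1/(1-y)))) y := (hlog1.const_sub _).const_mul _
        have ht3 : HasDerivAt (fun z => (Real.qaryEntropy d z - Real.qaryEntropy d s)^2)
            (2*(Real.qaryEntropy d y - Real.qaryEntropy d s)^1*φ) y :=
          (hq.sub_const _).pow 2
        have := ((ht1.add ht2).const_mul (3*c^2)).sub ht3
        refine this.congr_deriv ?_
        field_simp
      rw [hG.deriv]
      -- concavity: f y - f s ≤ ((y-s)/y) * f y
      have hconc : Real.qaryEntropy d y - Real.qaryEntropy d s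
          ≤ ((y-s)/y) * Real.qaryEntropy d y := by
        have hc2 := (Real.strictConcaveOn_qaryEntropy (q := d)).concaveOn
        have hmem0 : (0:ℝ) ∈ Icc (0:ℝ) 1 := by constructor <;> norm_num
        have hmemy : y ∈ Icc (0:ℝ) 1 := ⟨hy0.le, hy1.le⟩
        have ha : (0:ℝ) ≤ (y-s)/y := div_nonneg (by linarith [hy.1]) hy0.le
        have hb : (0:ℝ) ≤ s/y := by positivity
        have hab : (y-s)/y + s/y = 1 := by field_simp; ring
        have h := hc2.2 hmem0 hmemy ha hb hab
        have hcomb : (((y-s)/y) • (0:ℝ)) + ((s/y) • y) = s := by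
          simp only [smul_eq_mul]
          field_simp
          ring
        rw [hcomb] at h
        simp only [smul_eq_mul, Real.qaryEntropy_zero, mul_zero, zero_add] at h
        have hfy0 : 0 ≤ Real.qaryEntropy d y := Real.qaryEntropy_nonneg hy0.le hy1.le
        nlinarith [h]
      have hmaster := master hd hy0 hyb
      rw [← hφdef, ← hcdef] at hmaster
      clear_value φ c
      -- combine: 2*(f y - f s)*φ*(y*(1-y)) ≤ 3*c^2*(y-s)
      have hfy0 : 0 ≤ Real.qaryEntropy d y := Real.qaryEntropy_nonneg hy0.le hy1.le
      have hys : 0 ≤ y - s := by linarith [hy.1]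
      have hchain : (Real.qaryEntropy d y - Real.qaryEntropy d s) * (φ*(y*(1-y)))
          ≤ (3/2*c^2) * (y-s) := by
        have h1 : (Real.qaryEntropy d y - Real.qaryEntropy d s) * (φ*(y*(1-y)))
            ≤ ((y-s)/y) * Real.qaryEntropy d y * (φ*(y*(1-y))) :=
          mul_le_mul_of_nonneg_right hconc (by positivity)
        have h2 : ((y-s)/y) * Real.qaryEntropy d y * (φ*(y*(1-y)))
            = (y-s) * (Real.qaryEntropy d y * ((1-y)*φ)) := by
          field_simp
        have h3 : (y-s) * (Real.qaryEntropy d y * ((1-y)*φ)) ≤ (y-s) * (3/2*c^2) :=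
          mul_le_mul_of_nonneg_left hmaster hys
        calc (Real.qaryEntropy d y - Real.qaryEntropy d s) * (φ*(y*(1-y)))
            ≤ ((y-s)/y) * Real.qaryEntropy d y * (φ*(y*(1-y))) := h1
          _ = (y-s) * (Real.qaryEntropy d y * ((1-y)*φ)) := h2
          _ ≤ (y-s) * (3/2*c^2) := h3
          _ = (3/2*c^2) * (y-s) := by ring
      -- conclude nonnegativity of the derivative
      have hquot : -(s*y⁻¹) + (1-s)*(1/(1-y)) = (y-s) / (y*(1-y)) := by
        field_simp
        ring
      rw [hquot]
      have hpos : 0 < y*(1-y) := by positivity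
      have hfinal : 0 ≤ 3*c^2*(y-s) - 2*(Real.qaryEntropy d y - Real.qaryEntropy d s)*φ*(y*(1-y)) := by
        nlinarith [hchain]
      have heq : 3*c^2*((y-s)/(y*(1-y))) - 2*(Real.qaryEntropy d y - Real.qaryEntropy d s)*φ
          = (3*c^2*(y-s) - 2*(Real.qaryEntropy d y - Real.qaryEntropy d s)*φ*(y*(1-y)))
            / (y*(1-y)) := by
        field_simp
      rw [heq]
      exact div_nonneg hfinal hpos.le
  have h0 : G s = 0 := by rw [hGdef]; simp
  have := hmono (left_mem_Icc.mpr hsr) (right_mem_Icc.mpr hsr) hsr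
  rw [h0] at this
  rw [hGdef] at this
  simp only at this
  have hfix : s * (Real.log s - Real.log r) = s*Real.log s - s*Real.log r := by ring
  linarith [this]

lemma binEntropy'_eq (x : ℝ) : binEntropy' x = Real.binEntropy x := by
  rw [binEntropy', Real.binEntropy, Real.log_inv, Real.log_inv]; ring

lemma qaryEntropy_explicit' (d : ℕ) (y : ℝ) :
    Real.qaryEntropy d y = y * Real.log ((d:ℝ)-1) + Real.binEntropy y := by
  rw [Real.qaryEntropy]; norm_num

lemma key_main {d : ℕ} (hd : 2 ≤ d) {s r : ℝ}
    (hs : s ∈ Icc (0:ℝ) (((d:ℝ)-1)/d)) (hr : r ∈ Icc (0:ℝ) (((d:ℝ)-1)/d))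
    (h00 : r = 0 → s = 0) :
    (Real.qaryEntropy d s - Real.qaryEntropy d r)^2
      ≤ 3 * (Real.log d)^2
        * (s * Real.log (s/r) + (1-s) * Real.log ((1-s)/(1-r))) := by
  have hd2 : (2:ℝ) ≤ d := by exact_mod_cast hd
  have hdpos : (0:ℝ) < d := by linarith
  have hb1 : ((d:ℝ)-1)/d < 1 := by rw [div_lt_one hdpos]; linarith
  have hs1 : s < 1 := lt_of_le_of_lt hs.2 hb1
  have hr1 : r < 1 := lt_of_le_of_lt hr.2 hb1
  rcases eq_or_lt_of_le hr.1 with hr0 | hr0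
  · -- r = 0, hence s = 0
    have hs0 : s = 0 := h00 hr0.symm
    rw [hs0, ← hr0]
    norm_num
  · -- r > 0
    have hbridge : s * Real.log (s/r) + (1-s) * Real.log ((1-s)/(1-r))
        = s*(Real.log s - Real.log r) + (1-s)*(Real.log (1-s) - Real.log (1-r)) := by
      have h2 : Real.log ((1-s)/(1-r)) = Real.log (1-s) - Real.log (1-r) :=
        Real.log_div (by linarith) (by linarith)
      rcases eq_or_lt_of_le hs.1 with hs0 | hs0
      · rw [← hs0]
        simp [one_div, Real.log_inv]
      · rw [Real.log_div hs0.ne' hr0.ne', h2]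
    rw [hbridge]
    rcases lt_trichotomy s r with hsr | hsr | hsr
    · have h := key_lt hd hs.1 hsr.le hr.2
      calc (Real.qaryEntropy d s - Real.qaryEntropy d r)^2
          = (Real.qaryEntropy d r - Real.qaryEntropy d s)^2 := by ring
        _ ≤ _ := h
    · rw [hsr]
      have : r*(Real.log r - Real.log r) + (1-r)*(Real.log (1-r) - Real.log (1-r)) = 0 := by ring
      rw [this]
      norm_num
    · exact key_gt hd hr0 hsr.le hs.2

end MfunAux

/-- quadratic lower bound `M(Δ,d) ≥ Δ²/(3 log² d)`. -/
theorem Mfun_ge_quadratic (d : ℕ) (hd : 2 ≤ d)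
    (Δ : ℝ) (hΔ : Δ ∈ Set.Icc (-Real.log d) (Real.log d)) :
    ENNReal.ofReal (Δ^2 / (3 * (Real.log d)^2)) ≤ Mfun Δ d := by
  apply le_sInf
  rintro m ⟨s, r, hs, hr, hcon, rfl⟩
  have hd2 : (2:ℝ) ≤ d := by exact_mod_cast hd
  have hdpos : (0:ℝ) < d := by linarith
  have hb1 : ((d:ℝ)-1)/d < 1 := by rw [div_lt_one hdpos]; linarith
  have hr1 : r < 1 := lt_of_le_of_lt hr.2 hb1
  have hlogd : 0 < Real.log d := Real.log_pos (by linarith)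
  rw [binRelEntropy]
  split_ifs with hif
  · exact le_top
  · push_neg at hif
    have h00 : r = 0 → s = 0 := by
      intro h0
      have := hif.1 h0
      exact le_antisymm (by linarith) hs.1
    apply ENNReal.ofReal_le_ofReal
    rw [div_le_iff₀ (by positivity)]
    have hΔeq : Δ = Real.qaryEntropy d s - Real.qaryEntropy d r := by
      rw [← hcon, qaryEntropy_explicit', qaryEntropy_explicit', ← binEntropy'_eq,
        ← binEntropy'_eq]
      ring
    rw [hΔeq]
    calc (Real.qaryEntropy d s - Real.qaryEntropy d r)^2
        ≤ 3 * (Real.log d)^2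
          * (s * Real.log (s/r) + (1-s) * Real.log ((1-s)/(1-r))) := key_main hd hs hr h00
      _ = (s * Real.log (s/r) + (1-s) * Real.log ((1-s)/(1-r))) * (3 * (Real.log d)^2) := by
          ring


end
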